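/- arXiv:1204.1033 — 5 statements merged into one kernel-verified Lean document; each statement's English description precedes it below -/
import Mathlib

section
/- For every nonzero complex number q and every integer l ≥ 2, the conjugation makes PG_{l,q} into a *-algebra — that is, (fg)* = g* f* holds for all f, g ∈ PG_{l,q} — if and only if q is real. -/
open scoped BigOperators

namespace Para

/-- The paragrassmann algebra `PG_{l,q}` modeled as families of coefficients
in the anti-Wick basis `{θ^i θ̄^j}`. -/
abbrev PG (l : ℕ) := Fin l → Fin l → ℂ

/-- The anti-Wick basis element `θ^i θ̄^j`. -/
def basis (l : ℕ) (i j : ℕ) : PG l := fun a b => if (a : ℕ) = i ∧ (b : ℕ) = j then 1 else 0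

/-- The multiplication of `PG_{l,q}`:
`(θ^i θ̄^j)(θ^k θ̄^m) = q^{-jk} θ^{i+k} θ̄^{j+m}` when `i+k ≤ l-1` and `j+m ≤ l-1`,
and `0` otherwise. -/
noncomputable def pgMul (l : ℕ) (q : ℂ) (f g : PG l) : PG l := fun p r =>
  ∑ i : Fin l, ∑ j : Fin l, ∑ k : Fin l, ∑ m : Fin l,
    if (i : ℕ) + (k : ℕ) = (p : ℕ) ∧ (j : ℕ) + (m : ℕ) = (r : ℕ)
      then q ^ (-(((j : ℕ) * (k : ℕ) : ℕ) : ℤ)) * f i j * g k m else 0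

/-- The conjugation `f ↦ f*`, determined by `(θ^i θ̄^j)* = θ^j θ̄^i` and anti-linearity. -/
def pgStar (l : ℕ) (f : PG l) : PG l := fun i j => (starRingEnd ℂ) (f j i)

lemma sum4_prod (l : ℕ) (T : Fin l → Fin l → Fin l → Fin l → ℂ) :
    (∑ i : Fin l, ∑ j : Fin l, ∑ k : Fin l, ∑ m : Fin l, T i j k m)
      = ∑ x : Fin l × Fin l × Fin l × Fin l, T x.1 x.2.1 x.2.2.1 x.2.2.2 := by
  rw [Fintype.sum_prod_type]
  simp_rw [Fintype.sum_prod_type]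

lemma sum4_rev (l : ℕ) (T : Fin l → Fin l → Fin l → Fin l → ℂ) :
    (∑ i : Fin l, ∑ j : Fin l, ∑ k : Fin l, ∑ m : Fin l, T m k j i)
      = ∑ i : Fin l, ∑ j : Fin l, ∑ k : Fin l, ∑ m : Fin l, T i j k m := by
  rw [sum4_prod, sum4_prod]
  exact Fintype.sum_equiv ⟨fun x => (x.2.2.2, x.2.2.1, x.2.1, x.1),
    fun x => (x.2.2.2, x.2.2.1, x.2.1, x.1), fun x => rfl, fun x => rfl⟩ _ _ (fun x => rfl)

lemma star_basis (l a b : ℕ) : pgStar l (basis l a b) = basis l b a := by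
  funext i j
  simp [pgStar, basis, apply_ite (starRingEnd ℂ), and_comm]

lemma key (l : ℕ) (hl : 2 ≤ l) (q : ℂ) :
    pgMul l q (basis l 0 1) (basis l 1 0) ⟨1, by omega⟩ ⟨1, by omega⟩ = q ^ (-1 : ℤ) := by
  simp only [pgMul]
  rw [sum4_prod]
  rw [Fintype.sum_eq_single ((⟨0, by omega⟩, ⟨1, by omega⟩, ⟨1, by omega⟩, ⟨0, by omega⟩) :
      Fin l × Fin l × Fin l × Fin l)]
  · norm_num [basis]
  · rintro ⟨i, j, k, m⟩ hx
    simp only [basis]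
    by_cases h2 : (i : ℕ) = 0 ∧ (j : ℕ) = 1
    · by_cases h3 : (k : ℕ) = 1 ∧ (m : ℕ) = 0
      · exfalso
        apply hx
        simp only [Prod.mk.injEq, Fin.ext_iff]
        exact ⟨h2.1, h2.2, h3.1, h3.2⟩
      · simp [h3]
    · simp [h2]

/-- For every nonzero complex `q` and every integer `l ≥ 2`, the conjugation
makes `PG_{l,q}` a *-algebra, i.e. `(fg)* = g* f*` for all `f, g`, iff `q` is real. -/
theorem star_mul_iff_q_real (l : ℕ) (hl : 2 ≤ l) (q : ℂ) (hq : q ≠ 0) :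
    (∀ f g : PG l, pgStar l (pgMul l q f g) = pgMul l q (pgStar l g) (pgStar l f)) ↔
      (starRingEnd ℂ) q = q := by
  constructor
  · intro h
    have H := h (basis l 0 1) (basis l 1 0)
    have H2 := congrFun (congrFun H ⟨1, by omega⟩) ⟨1, by omega⟩
    rw [star_basis, star_basis] at H2
    have H3 : (starRingEnd ℂ) (pgMul l q (basis l 0 1) (basis l 1 0) ⟨1, by omega⟩ ⟨1, by omega⟩)
        = pgMul l q (basis l 0 1) (basis l 1 0) ⟨1, by omega⟩ ⟨1, by omega⟩ := H2
    rw [key l hl q, map_zpow₀] at H3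
    have : ((starRingEnd ℂ) q)⁻¹ = q⁻¹ := by
      rw [← zpow_neg_one, ← zpow_neg_one]
      exact H3
    exact inv_injective this
  · intro hq' f g
    funext p r
    simp only [pgStar, pgMul, map_sum, apply_ite (starRingEnd ℂ), map_zero, map_mul,
      map_zpow₀, hq']
    rw [← sum4_rev]
    apply Finset.sum_congr rfl; intro i _
    apply Finset.sum_congr rfl; intro j _
    apply Finset.sum_congr rfl; intro k _
    apply Finset.sum_congr rfl; intro m _
    have h1 : ((m:ℕ) + (j:ℕ) = (r:ℕ) ∧ (k:ℕ) + (i:ℕ) = (p:ℕ)) ↔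
        ((i:ℕ) + (k:ℕ) = (p:ℕ) ∧ (j:ℕ) + (m:ℕ) = (r:ℕ)) := by constructor <;> omega
    rw [if_congr h1 rfl rfl]
    split_ifs with h
    · rw [mul_comm (k:ℕ) (j:ℕ)]; ring
    · rfl

end Para
end

section
/- The restriction of the sesquilinear form ⟨·,·⟩_w to the subspace S = ℬ_H + ℬ_AH of PG_{l,q} is a positive definite Hermitian inner product, and the 2l−1 vectors φ_n := w_n^{−1/2} θ^n for n = 0,…,l−1 together with φ_m* := w_m^{−1/2} θ̄^m for m = 1,…,l−1 form an orthonormal basis of S; in particular S has complex dimension 2l−1. -/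
open scoped BigOperators

namespace Para

/-- The weighted sesquilinear form `⟨·,·⟩_w` on `PG_{l,q}` (anti-linear in the first
argument, linear in the second), determined on anti-Wick basis elements by
`⟨θ^a θ̄^b, θ^c θ̄^d⟩_w = w_{a+d}` if `a+d = b+c` and `a+d ≤ l−1`, and `= 0` otherwise. -/
noncomputable def form (l : ℕ) (w : ℕ → ℝ) (f g : PG l) : ℂ :=
  ∑ a : Fin l, ∑ b : Fin l, ∑ c : Fin l, ∑ d : Fin l,
    (starRingEnd ℂ) (f a b) * g c d *
      (if (a : ℕ) + (d : ℕ) = (b : ℕ) + (c : ℕ) ∧ (a : ℕ) + (d : ℕ) ≤ l - 1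
        then ((w ((a : ℕ) + (d : ℕ)) : ℝ) : ℂ) else 0)

/-- The Segal–Bargmann space `ℬ_H = span_ℂ{θ^i : 0 ≤ i ≤ l−1}` (with `θ^i = θ^i θ̄^0`). -/
noncomputable def BH (l : ℕ) : Submodule ℂ (PG l) :=
  Submodule.span ℂ (Set.range fun i : Fin l => basis l (i : ℕ) 0)

/-- The anti-Segal–Bargmann space `ℬ_AH = span_ℂ{θ̄^j : 0 ≤ j ≤ l−1}`
(with `θ̄^j = θ^0 θ̄^j`). -/
noncomputable def BAH (l : ℕ) : Submodule ℂ (PG l) :=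
  Submodule.span ℂ (Set.range fun j : Fin l => basis l 0 (j : ℕ))

/-- The subspace `S = ℬ_H + ℬ_AH`. -/
noncomputable def SSp (l : ℕ) : Submodule ℂ (PG l) := BH l ⊔ BAH l

/-- The vectors `φ_n := w_n^{−1/2} θ^n`. -/
noncomputable def phi (l : ℕ) (w : ℕ → ℝ) (n : Fin l) : PG l :=
  (((Real.sqrt (w (n : ℕ))) : ℂ))⁻¹ • basis l (n : ℕ) 0

/-- The vectors `φ_m* := w_m^{−1/2} θ̄^m`. -/
noncomputable def phiStar (l : ℕ) (w : ℕ → ℝ) (m : Fin l) : PG l :=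
  (((Real.sqrt (w (m : ℕ))) : ℂ))⁻¹ • basis l 0 (m : ℕ)

set_option linter.unusedVariables false
set_option linter.dupNamespace false
set_option maxHeartbeats 1000000

section
variable {l : ℕ} (w : ℕ → ℝ)

/-! ### Basic computation of the form on basis vectors -/

lemma form_basis (i j c d : Fin l) :
    form l w (basis l i j) (basis l c d) =
      (if (i:ℕ)+(d:ℕ) = (j:ℕ)+(c:ℕ) ∧ (i:ℕ)+(d:ℕ) ≤ l-1
        then ((w ((i:ℕ)+(d:ℕ)) : ℝ) : ℂ) else 0) := by
  unfold form basis
  simp only [Fin.val_eq_val, ite_and, apply_ite (starRingEnd ℂ), map_one, map_zero,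
    ite_mul, one_mul, zero_mul]
  simp only [Finset.sum_ite_eq', Finset.mem_univ, if_true, Finset.sum_ite_irrel,
    Finset.sum_const_zero, Finset.sum_ite_eq]

/-! ### Linearity of the form -/

lemma form_zero_left (g : PG l) : form l w 0 g = 0 := by
  unfold form; simp

lemma form_zero_right (f : PG l) : form l w f 0 = 0 := by
  unfold form; simp

lemma form_add_left (f f' g : PG l) :
    form l w (f + f') g = form l w f g + form l w f' g := by
  unfold form
  simp only [Pi.add_apply, map_add, add_mul, Finset.sum_add_distrib]

lemma form_add_right (f g g' : PG l) :
    form l w f (g + g') = form l w f g + form l w f g' := by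
  unfold form
  simp only [Pi.add_apply, mul_add, add_mul, Finset.sum_add_distrib]

lemma form_smul_left (c : ℂ) (f g : PG l) :
    form l w (c • f) g = (starRingEnd ℂ) c * form l w f g := by
  unfold form
  simp only [Pi.smul_apply, smul_eq_mul, map_mul, Finset.mul_sum, mul_assoc]

lemma form_smul_right (c : ℂ) (f g : PG l) :
    form l w f (c • g) = c * form l w f g := by
  unfold form
  simp only [Pi.smul_apply, smul_eq_mul, Finset.mul_sum]
  congr 1; ext a; congr 1; ext b; congr 1; ext c'; congr 1; ext d; ring

lemma form_sum_left {κ : Type*} (s : Finset κ) (F : κ → PG l) (g : PG l) :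
    form l w (∑ k ∈ s, F k) g = ∑ k ∈ s, form l w (F k) g := by
  classical
  induction s using Finset.induction_on with
  | empty => simp [form_zero_left]
  | insert _ _ hk ih => rename_i a s'; rw [Finset.sum_insert hk, form_add_left,
      Finset.sum_insert hk, ih]

lemma form_sum_right {κ : Type*} (s : Finset κ) (f : PG l) (G : κ → PG l) :
    form l w f (∑ k ∈ s, G k) = ∑ k ∈ s, form l w f (G k) := by
  classical
  induction s using Finset.induction_on with
  | empty => simp [form_zero_right]
  | insert _ _ hk ih => rename_i a s'; rw [Finset.sum_insert hk, form_add_right,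
      Finset.sum_insert hk, ih]

/-! ### The distinguished family indexed by `Idx l` -/

abbrev Idx (l : ℕ) := Fin l ⊕ Fin (l - 1)

def msucc {l : ℕ} (m : Fin (l-1)) : Fin l := ⟨m.1 + 1, by omega⟩

lemma msucc_ne_zero [NeZero l] (m : Fin (l-1)) : (0 : Fin l) ≠ msucc m := by
  intro h
  have := congrArg Fin.val h
  simp [msucc] at this

def vgen : Idx l → PG l
  | .inl n => basis l n 0
  | .inr m => basis l 0 (msucc m)

def nuIdx : Idx l → ℕ
  | .inl n => n
  | .inr m => (m : ℕ) + 1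

lemma nuIdx_lt (k : Idx l) : nuIdx k < l := by
  cases k with
  | inl n => exact n.2
  | inr m => have := m.2; simp only [nuIdx]; omega

def coef [NeZero l] (f : PG l) : Idx l → ℂ
  | .inl n => f n 0
  | .inr m => f 0 (msucc m)

lemma form_vgen [NeZero l] (k j : Idx l) :
    form l w (vgen k) (vgen j) =
      if k = j then ((w (nuIdx k) : ℝ) : ℂ) else 0 := by
  have h0 : ((0 : Fin l) : ℕ) = 0 := Fin.val_zero l
  have hms : ∀ m : Fin (l-1), ((msucc m : Fin l) : ℕ) = (m : ℕ) + 1 := fun m => rfl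
  cases k with
  | inl n =>
    cases j with
    | inl n' =>
      show form l w (basis l (n:ℕ) 0) (basis l (n':ℕ) 0) = _
      rw [show (0:ℕ) = ((0:Fin l):ℕ) from h0.symm, form_basis]
      have hn : (n : ℕ) ≤ l - 1 := by have := n.2; omega
      simp only [h0, add_zero, zero_add, hn, and_true, Sum.inl.injEq, Fin.val_eq_val, nuIdx]
    | inr m' =>
      show form l w (basis l (n:ℕ) 0) (basis l ((0:Fin l):ℕ) ((msucc m':Fin l):ℕ)) = _
      rw [show basis l (n:ℕ) 0 = basis l (n:ℕ) ((0:Fin l):ℕ) by rw [h0], form_basis]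
      rw [if_neg (fun h => by simp only [h0, hms] at h; omega)]
      simp
  | inr m =>
    cases j with
    | inl n' =>
      show form l w (basis l ((0:Fin l):ℕ) ((msucc m:Fin l):ℕ)) (basis l (n':ℕ) 0) = _
      rw [show basis l (n':ℕ) 0 = basis l (n':ℕ) ((0:Fin l):ℕ) by rw [h0], form_basis]
      rw [if_neg (fun h => by simp only [h0, hms] at h; omega)]
      simp
    | inr m' =>
      show form l w (basis l ((0:Fin l):ℕ) ((msucc m:Fin l):ℕ))
             (basis l ((0:Fin l):ℕ) ((msucc m':Fin l):ℕ)) = _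
      rw [form_basis]
      simp only [h0, hms, zero_add, add_zero, Sum.inr.injEq]
      have hle : (m' : ℕ) + 1 ≤ l - 1 := by have := m'.2; omega
      by_cases hmm : m = m'
      · subst hmm
        simp [hle, nuIdx]
      · rw [if_neg (fun h => hmm (Fin.ext (by omega))), if_neg hmm]

/-! ### Membership in `S` -/

lemma support_of_mem_SSp [NeZero l] {f : PG l} (hf : f ∈ SSp l) :
    ∀ a b : Fin l, a ≠ 0 → b ≠ 0 → f a b = 0 := by
  let P : Submodule ℂ (PG l) :=
    { carrier := {f | ∀ a b : Fin l, a ≠ 0 → b ≠ 0 → f a b = 0}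
      add_mem' := by intro x y hx hy a b ha hb; simp [hx a b ha hb, hy a b ha hb]
      zero_mem' := by intro a b _ _; rfl
      smul_mem' := by intro c x hx a b ha hb; simp [hx a b ha hb] }
  have hS : SSp l ≤ P := by
    apply sup_le
    · rw [BH, Submodule.span_le]
      rintro _ ⟨i, rfl⟩ a b ha hb
      have hb' : (b : ℕ) ≠ 0 := fun h => hb (Fin.ext (by simp [h]))
      simp [basis, hb']
    · rw [BAH, Submodule.span_le]
      rintro _ ⟨j, rfl⟩ a b ha hb
      have ha' : (a : ℕ) ≠ 0 := fun h => ha (Fin.ext (by simp [h]))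
      simp [basis, ha']
  exact hS hf

lemma repr_of_mem_SSp [NeZero l] {f : PG l} (hf : f ∈ SSp l) :
    f = ∑ k : Idx l, coef f k • vgen k := by
  have hsupp := support_of_mem_SSp hf
  funext x y
  rw [Finset.sum_apply, Finset.sum_apply]
  rw [Fintype.sum_sum_type]
  simp only [Pi.smul_apply, smul_eq_mul, vgen, coef, basis, Fin.val_eq_val,
    mul_ite, mul_one, mul_zero]
  by_cases hy : y = 0
  · subst hy
    simp only [Fin.val_zero, ite_and, if_true, eq_self_iff_true]
    rw [Finset.sum_ite_eq Finset.univ x (fun n => f n 0)]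
    have h2 : (∑ m : Fin (l - 1), if (0:Fin l) = msucc m then f 0 (msucc m) else 0) = 0 := by
      apply Finset.sum_eq_zero
      intro m _
      rw [if_neg (msucc_ne_zero m)]
    simp [h2]
  · have hy' : (y : ℕ) ≠ 0 := fun h => hy (Fin.ext (by simp [h]))
    simp only [hy', ite_and, if_false, ite_false]
    by_cases hx : (x : ℕ) = 0
    · have hx0 : x = 0 := Fin.ext (by simp [hx])
      subst hx0
      simp only [Fin.val_zero, if_true, eq_self_iff_true, Finset.sum_const_zero, zero_add]
      have hylt : (y : ℕ) - 1 < l - 1 := by have := y.2; omega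
      rw [Finset.sum_eq_single (⟨(y : ℕ) - 1, hylt⟩ : Fin (l-1))]
      · have : msucc (⟨(y : ℕ) - 1, hylt⟩ : Fin (l-1)) = y := Fin.ext (by simp [msucc]; omega)
        rw [this]
        simp
      · intro m _ hm
        rw [if_neg]
        intro h
        apply hm
        apply Fin.ext
        have := congrArg Fin.val h
        simp [msucc] at this ⊢
        omega
      · intro h; exact absurd (Finset.mem_univ _) h
    · have hx0 : x ≠ 0 := fun h => hx (by simp [h])
      simp only [hx, if_false, ite_false, Finset.sum_const_zero, add_zero]
      rw [hsupp x y hx0 hy]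
      simp

/-! ### The diagonal formula for the form on `S` -/

lemma form_S [NeZero l] {f g : PG l} (hf : f ∈ SSp l) (hg : g ∈ SSp l) :
    form l w f g = ∑ k : Idx l,
      (starRingEnd ℂ) (coef f k) * coef g k * ((w (nuIdx k) : ℝ) : ℂ) := by
  conv_lhs => rw [repr_of_mem_SSp hf, repr_of_mem_SSp hg]
  rw [form_sum_left]
  apply Finset.sum_congr rfl
  intro k _
  rw [form_smul_left, form_sum_right]
  simp only [form_smul_right, form_vgen, mul_ite, mul_zero,
    Finset.sum_ite_eq, Finset.mem_univ, if_true]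
  ring

end
section
variable {l : ℕ} (w : ℕ → ℝ)

lemma form_self [NeZero l] {f : PG l} (hf : f ∈ SSp l) :
    form l w f f =
      (((∑ k : Idx l, Complex.normSq (coef f k) * w (nuIdx k)) : ℝ) : ℂ) := by
  rw [form_S w hf hf]
  push_cast
  apply Finset.sum_congr rfl
  intro k _
  rw [← Complex.normSq_eq_conj_mul_self]

lemma vgen_apply_inl [NeZero l] (g : Idx l → ℂ) (n : Fin l) :
    (∑ k : Idx l, g k • vgen k) n 0 = g (.inl n) := by
  rw [Finset.sum_apply, Finset.sum_apply, Fintype.sum_sum_type]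
  simp only [Pi.smul_apply, smul_eq_mul, vgen, basis, Fin.val_eq_val, Fin.val_zero,
    mul_ite, mul_one, mul_zero, ite_and, if_true, eq_self_iff_true]
  rw [Finset.sum_ite_eq Finset.univ n (fun n' => g (.inl n'))]
  have h2 : (∑ m' : Fin (l - 1), if (0:ℕ) = ((msucc m' : Fin l):ℕ) then g (.inr m') else 0)
      = 0 := Finset.sum_eq_zero fun m' _ => if_neg (by simp [msucc])
  by_cases hn : (n:ℕ) = 0 <;> simp [hn, h2]

lemma vgen_apply_inr [NeZero l] (g : Idx l → ℂ) (m : Fin (l-1)) :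
    (∑ k : Idx l, g k • vgen k) 0 (msucc m) = g (.inr m) := by
  rw [Finset.sum_apply, Finset.sum_apply, Fintype.sum_sum_type]
  have hms : ((msucc m : Fin l) : ℕ) = (m:ℕ) + 1 := rfl
  simp only [Pi.smul_apply, smul_eq_mul, vgen, basis, Fin.val_eq_val, Fin.val_zero, hms,
    mul_ite, mul_one, mul_zero, ite_and]
  have key : (∑ x : Fin (l-1), if (m:ℕ) + 1 = ((msucc x : Fin l):ℕ) then g (Sum.inr x) else 0)
      = g (Sum.inr m) := by
    rw [Finset.sum_eq_single m]
    · rw [if_pos hms.symm]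
    · intro x _ hx
      refine if_neg fun h => hx ?_
      apply Fin.ext
      simp only [msucc] at h
      omega
    · intro h; exact absurd (Finset.mem_univ _) h
  simp [key]

end
section
variable {l : ℕ} (w : ℕ → ℝ)

lemma vgen_linearIndependent [NeZero l] :
    LinearIndependent ℂ (vgen : Idx l → PG l) := by
  rw [Fintype.linearIndependent_iff]
  intro g hg k
  cases k with
  | inl n =>
    have h := vgen_apply_inl g n
    rw [hg] at h
    exact h.symm
  | inr m =>
    have h := vgen_apply_inr g m
    rw [hg] at h
    exact h.symm

lemma span_vgen [NeZero l] :
    Submodule.span ℂ (Set.range (vgen : Idx l → PG l)) = SSp l := by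
  apply le_antisymm
  · rw [Submodule.span_le]
    rintro _ ⟨k, rfl⟩
    cases k with
    | inl n => exact Submodule.mem_sup_left (Submodule.subset_span ⟨n, rfl⟩)
    | inr m => exact Submodule.mem_sup_right (Submodule.subset_span ⟨msucc m, rfl⟩)
  · apply sup_le
    · rw [BH, Submodule.span_le]
      rintro _ ⟨i, rfl⟩
      exact Submodule.subset_span ⟨.inl i, rfl⟩
    · rw [BAH, Submodule.span_le]
      rintro _ ⟨j, rfl⟩
      by_cases hj : (j:ℕ) = 0
      · refine Submodule.subset_span ⟨.inl 0, ?_⟩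
        show basis l ((0:Fin l):ℕ) 0 = basis l 0 (j:ℕ)
        rw [hj, Fin.val_zero]
      · have hjlt : (j:ℕ) - 1 < l - 1 := by have := j.2; omega
        refine Submodule.subset_span ⟨.inr ⟨(j:ℕ)-1, hjlt⟩, ?_⟩
        show basis l 0 ((msucc ⟨(j:ℕ)-1, hjlt⟩ : Fin l):ℕ) = basis l 0 (j:ℕ)
        have hval : ((msucc ⟨(j:ℕ)-1, hjlt⟩ : Fin l):ℕ) = (j:ℕ) := by
          show (j:ℕ) - 1 + 1 = (j:ℕ); omega
        rw [hval]

lemma finrank_SSp (hl : 2 ≤ l) :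
    Module.finrank ℂ (SSp l) = 2 * l - 1 := by
  haveI : NeZero l := ⟨by omega⟩
  rw [← span_vgen, finrank_span_eq_card (vgen_linearIndependent (l := l))]
  simp only [Fintype.card_sum, Fintype.card_fin]
  omega

end

/-- The restriction of `⟨·,·⟩_w` to `S = ℬ_H + ℬ_AH` is a positive
definite Hermitian inner product, and the `2l−1` vectors `φ_n` (`n = 0,…,l−1`)
together with `φ_m*` (`m = 1,…,l−1`) form an orthonormal basis of `S`;
in particular `S` has complex dimension `2l−1`. -/
theorem S_inner_product_space (l : ℕ) (hl : 2 ≤ l) (q : ℂ) (hq : q ≠ 0)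
    (w : ℕ → ℝ) (hw : ∀ n < l, 0 < w n) :
    (∀ f ∈ SSp l, ∀ g ∈ SSp l, (starRingEnd ℂ) (form l w f g) = form l w g f) ∧
    (∀ f ∈ SSp l, (form l w f f).im = 0 ∧ 0 ≤ (form l w f f).re) ∧
    (∀ f ∈ SSp l, (form l w f f = 0 ↔ f = 0)) ∧
    (∀ n m : Fin l, form l w (phi l w n) (phi l w m) = if n = m then 1 else 0) ∧
    (∀ n m : Fin l, 1 ≤ (n : ℕ) → 1 ≤ (m : ℕ) →
      form l w (phiStar l w n) (phiStar l w m) = if n = m then 1 else 0) ∧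
    (∀ n m : Fin l, 1 ≤ (m : ℕ) →
      form l w (phi l w n) (phiStar l w m) = 0 ∧
      form l w (phiStar l w m) (phi l w n) = 0) ∧
    Submodule.span ℂ
        (Set.range (phi l w) ∪ (phiStar l w '' {m : Fin l | 1 ≤ (m : ℕ)})) = SSp l ∧
    Module.finrank ℂ (SSp l) = 2 * l - 1 := by
  haveI : NeZero l := ⟨by omega⟩
  have hw' : ∀ k : Idx l, 0 < w (nuIdx k) := fun k => hw _ (nuIdx_lt k)
  have sqrt_mul : ∀ i : ℕ, i < l →
      (starRingEnd ℂ) (((Real.sqrt (w i) : ℝ) : ℂ))⁻¹ *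
        ((((Real.sqrt (w i) : ℝ) : ℂ))⁻¹ * ((w i : ℝ) : ℂ)) = 1 := by
    intro i hi
    have h1 : 0 < w i := hw i hi
    have hs : Real.sqrt (w i) ≠ 0 := ne_of_gt (Real.sqrt_pos.2 h1)
    have hsC : ((Real.sqrt (w i) : ℝ) : ℂ) ≠ 0 := Complex.ofReal_ne_zero.2 hs
    rw [map_inv₀, Complex.conj_ofReal,
      show ((w i : ℝ) : ℂ) = ((Real.sqrt (w i) : ℝ) : ℂ) * ((Real.sqrt (w i) : ℝ) : ℂ) by
        rw [← Complex.ofReal_mul, Real.mul_self_sqrt h1.le]]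
    field_simp
  refine ⟨?_, ?_, ?_, ?_, ?_, ?_, ?_, finrank_SSp hl⟩
  · -- hermitian
    intro f hf g hg
    rw [form_S w hf hg, form_S w hg hf, map_sum]
    apply Finset.sum_congr rfl
    intro k _
    simp only [map_mul, Complex.conj_conj, Complex.conj_ofReal]
    ring
  · -- positivity
    intro f hf
    rw [form_self w hf]
    refine ⟨Complex.ofReal_im _, ?_⟩
    rw [Complex.ofReal_re]
    exact Finset.sum_nonneg fun k _ =>
      mul_nonneg (Complex.normSq_nonneg _) (hw' k).le
  · -- definiteness
    intro f hf
    constructor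
    · intro h
      rw [form_self w hf, Complex.ofReal_eq_zero] at h
      have hcoef : ∀ k : Idx l, coef f k = 0 := by
        intro k
        have hterm := (Finset.sum_eq_zero_iff_of_nonneg
          (fun k _ => mul_nonneg (Complex.normSq_nonneg _) (hw' k).le)).1 h k
          (Finset.mem_univ k)
        exact Complex.normSq_eq_zero.1
          ((mul_eq_zero.1 hterm).resolve_right (ne_of_gt (hw' k)))
      rw [repr_of_mem_SSp hf]
      exact Finset.sum_eq_zero fun k _ => by rw [hcoef k, zero_smul]
    · rintro rfl
      exact form_zero_left w 0
  · -- orthonormality of phi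
    intro n m
    rw [phi, phi, form_smul_left, form_smul_right,
      show basis l (n:ℕ) 0 = vgen (Sum.inl n) from rfl,
      show basis l (m:ℕ) 0 = vgen (Sum.inl m) from rfl, form_vgen]
    by_cases h : n = m
    · subst h
      rw [if_pos rfl, if_pos rfl]
      exact sqrt_mul (n:ℕ) n.2
    · rw [if_neg (fun hh => h (Sum.inl.inj hh)), if_neg h]
      simp
  · -- orthonormality of phiStar
    intro n m hn hm
    have hnlt : (n:ℕ) - 1 < l - 1 := by have := n.2; omega
    have hmlt : (m:ℕ) - 1 < l - 1 := by have := m.2; omega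
    have hbn : basis l 0 (n:ℕ) = vgen (Sum.inr ⟨(n:ℕ)-1, hnlt⟩) := by
      show basis l 0 (n:ℕ) = basis l 0 ((msucc ⟨(n:ℕ)-1, hnlt⟩ : Fin l):ℕ)
      have hv : ((msucc ⟨(n:ℕ)-1, hnlt⟩ : Fin l):ℕ) = (n:ℕ) := by
        show (n:ℕ) - 1 + 1 = (n:ℕ); omega
      rw [hv]
    have hbm : basis l 0 (m:ℕ) = vgen (Sum.inr ⟨(m:ℕ)-1, hmlt⟩) := by
      show basis l 0 (m:ℕ) = basis l 0 ((msucc ⟨(m:ℕ)-1, hmlt⟩ : Fin l):ℕ)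
      have hv : ((msucc ⟨(m:ℕ)-1, hmlt⟩ : Fin l):ℕ) = (m:ℕ) := by
        show (m:ℕ) - 1 + 1 = (m:ℕ); omega
      rw [hv]
    rw [phiStar, phiStar, form_smul_left, form_smul_right, hbn, hbm, form_vgen]
    by_cases h : n = m
    · subst h
      rw [if_pos rfl, if_pos rfl]
      show (starRingEnd ℂ) _ * (_ * ((w ((n:ℕ) - 1 + 1) : ℝ) : ℂ)) = 1
      rw [show (n:ℕ) - 1 + 1 = (n:ℕ) by omega]
      exact sqrt_mul (n:ℕ) n.2
    · rw [if_neg, if_neg h]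
      · simp
      · intro hh
        have := Sum.inr.inj hh
        have hval := congrArg Fin.val this
        simp only at hval
        exact h (Fin.ext (by omega))
  · -- cross terms
    intro n m hm
    have hmlt : (m:ℕ) - 1 < l - 1 := by have := m.2; omega
    have hbm : basis l 0 (m:ℕ) = vgen (Sum.inr ⟨(m:ℕ)-1, hmlt⟩) := by
      show basis l 0 (m:ℕ) = basis l 0 ((msucc ⟨(m:ℕ)-1, hmlt⟩ : Fin l):ℕ)
      have hv : ((msucc ⟨(m:ℕ)-1, hmlt⟩ : Fin l):ℕ) = (m:ℕ) := by
        show (m:ℕ) - 1 + 1 = (m:ℕ); omega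
      rw [hv]
    constructor
    · rw [phi, phiStar, form_smul_left, form_smul_right,
        show basis l (n:ℕ) 0 = vgen (Sum.inl n) from rfl, hbm, form_vgen,
        if_neg (by simp)]
      simp
    · rw [phiStar, phi, form_smul_left, form_smul_right,
        show basis l (n:ℕ) 0 = vgen (Sum.inl n) from rfl, hbm, form_vgen,
        if_neg (by simp)]
      simp
  · -- span
    apply le_antisymm
    · rw [Submodule.span_le]
      rintro _ (⟨n, rfl⟩ | ⟨m, hm, rfl⟩)
      · rw [phi]
        exact Submodule.smul_mem _ _
          (Submodule.mem_sup_left (Submodule.subset_span ⟨n, rfl⟩))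
      · rw [phiStar]
        exact Submodule.smul_mem _ _
          (Submodule.mem_sup_right (Submodule.subset_span ⟨m, rfl⟩))
    · apply sup_le
      · rw [BH, Submodule.span_le]
        rintro _ ⟨i, rfl⟩
        beta_reduce
        have hsC : ((Real.sqrt (w (i:ℕ)) : ℝ) : ℂ) ≠ 0 :=
          Complex.ofReal_ne_zero.2 (ne_of_gt (Real.sqrt_pos.2 (hw _ i.2)))
        rw [show basis l (i:ℕ) 0 = ((Real.sqrt (w (i:ℕ)) : ℝ) : ℂ) • phi l w i by
          rw [phi, smul_smul, mul_inv_cancel₀ hsC, one_smul]]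
        exact Submodule.smul_mem _ _ (Submodule.subset_span (Or.inl ⟨i, rfl⟩))
      · rw [BAH, Submodule.span_le]
        rintro _ ⟨j, rfl⟩
        beta_reduce
        by_cases hj : (j:ℕ) = 0
        · have hsC : ((Real.sqrt (w (((0:Fin l)):ℕ)) : ℝ) : ℂ) ≠ 0 :=
            Complex.ofReal_ne_zero.2 (ne_of_gt (Real.sqrt_pos.2 (hw _ (Fin.is_lt _))))
          rw [show basis l 0 (j:ℕ) = basis l (((0:Fin l)):ℕ) 0 by rw [hj, Fin.val_zero]]
          rw [show basis l (((0:Fin l)):ℕ) 0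
              = ((Real.sqrt (w (((0:Fin l)):ℕ)) : ℝ) : ℂ) • phi l w 0 by
            rw [phi, smul_smul, mul_inv_cancel₀ hsC, one_smul]]
          exact Submodule.smul_mem _ _ (Submodule.subset_span (Or.inl ⟨0, rfl⟩))
        · have hsC : ((Real.sqrt (w (j:ℕ)) : ℝ) : ℂ) ≠ 0 :=
            Complex.ofReal_ne_zero.2 (ne_of_gt (Real.sqrt_pos.2 (hw _ j.2)))
          rw [show basis l 0 (j:ℕ) = ((Real.sqrt (w (j:ℕ)) : ℝ) : ℂ) • phiStar l w j by
            rw [phiStar, smul_smul, mul_inv_cancel₀ hsC, one_smul]]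
          exact Submodule.smul_mem _ _ (Submodule.subset_span
            (Or.inr ⟨j, show (1:ℕ) ≤ (j:ℕ) by omega, rfl⟩))

end Para
end

section
/- For l = 2 and real weights w_0, w_1 > 0, there is a unique function k : ({0,1}²) × ({0,1}²) → ℂ satisfying Σ_{(c,d) ∈ {0,1}²} conj(k_{(a,b),(c,d)}) G_{(c,d),(i,j)} = δ_{(b,a),(i,j)} for all a,b,i,j ∈ {0,1} (where δ_{(b,a),(i,j)} = 1 if b = i and a = j, else 0), and it is given by k_{(1,1),(0,0)} = k_{(0,1),(1,0)} = k_{(1,0),(0,1)} = k_{(0,0),(1,1)} = 1/w_1, k_{(1,1),(1,1)} = −w_0/(w_1)², and all other entries equal to 0. Equivalently, the unique reproducing kernel of PG_{2,q} is K_PG = (1/w_1) θθ̄ ⊗ 1 + (1/w_1) θ̄ ⊗ η + (1/w_1) θ ⊗ η̄ + (1/w_1) 1 ⊗ ηη̄ − (w_0/w_1²) θθ̄ ⊗ ηη̄. -/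
open scoped BigOperators

namespace Para

/-- The `l² × l²` Gram matrix of the anti-Wick basis of the paragrassmann algebra
`PG_{l,q}` with respect to the weighted sesquilinear form: rows and columns are indexed
by pairs `(c,d), (i,j) ∈ {0,…,l−1}²`, and
`G_{(c,d),(i,j)} = w_{c+j}` if `c+j = d+i` and `c+j ≤ l−1`, and `= 0` otherwise. -/
def gram (l : ℕ) (w : ℕ → ℝ) : Matrix (Fin l × Fin l) (Fin l × Fin l) ℝ :=
  Matrix.of fun p r =>
    if (p.1 : ℕ) + (r.2 : ℕ) = (p.2 : ℕ) + (r.1 : ℕ) ∧ (p.1 : ℕ) + (r.2 : ℕ) ≤ l - 1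
      then w ((p.1 : ℕ) + (r.2 : ℕ)) else 0

/-- The explicit reproducing kernel coefficients for `PG_{2,q}`:
`k_{(1,1),(0,0)} = k_{(0,1),(1,0)} = k_{(1,0),(0,1)} = k_{(0,0),(1,1)} = 1/w_1`,
`k_{(1,1),(1,1)} = −w_0/w_1²`, and all other entries `0`. -/
noncomputable def kSpec (w : ℕ → ℝ) (p r : Fin 2 × Fin 2) : ℂ :=
  if p = (1, 1) ∧ r = (0, 0) then ((w 1 : ℂ))⁻¹
  else if p = (0, 1) ∧ r = (1, 0) then ((w 1 : ℂ))⁻¹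
  else if p = (1, 0) ∧ r = (0, 1) then ((w 1 : ℂ))⁻¹
  else if p = (0, 0) ∧ r = (1, 1) then ((w 1 : ℂ))⁻¹
  else if p = (1, 1) ∧ r = (1, 1) then -(w 0 : ℂ) / ((w 1 : ℂ)) ^ 2
  else 0

/-- For `l = 2` and weights `w_0, w_1 > 0`, there is a unique
`k : ({0,1}²) × ({0,1}²) → ℂ` satisfying the coordinate form
`Σ_{(c,d)} conj(k_{(a,b),(c,d)}) G_{(c,d),(i,j)} = δ_{(b,a),(i,j)}` of the reproducing
property of `PG_{2,q}`, and it is given by `kSpec`; i.e. the unique reproducing kernel is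
`K_PG = (1/w_1) θθ̄⊗1 + (1/w_1) θ̄⊗η + (1/w_1) θ⊗η̄ + (1/w_1) 1⊗ηη̄ − (w_0/w_1²) θθ̄⊗ηη̄`. -/
theorem reproducing_kernel_PG2 (w : ℕ → ℝ) (hw0 : 0 < w 0) (hw1 : 0 < w 1)
    (k : (Fin 2 × Fin 2) → (Fin 2 × Fin 2) → ℂ) :
    (∀ a b i j : Fin 2,
        ∑ p : Fin 2 × Fin 2,
          (starRingEnd ℂ) (k (a, b) p) * ((gram 2 w p (i, j) : ℝ) : ℂ) =
            if b = i ∧ a = j then 1 else 0)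
      ↔ k = kSpec w := by
  have hw1' : (w 1 : ℂ) ≠ 0 := by exact_mod_cast hw1.ne'
  have hw0' : (w 0 : ℂ) ≠ 0 := by exact_mod_cast hw0.ne'
  constructor
  · intro h
    funext p r
    obtain ⟨a, b⟩ := p
    have e00 := h a b 0 0
    have e01 := h a b 0 1
    have e10 := h a b 1 0
    have e11 := h a b 1 1
    simp only [Fintype.sum_prod_type, Fin.sum_univ_two, gram, Matrix.of_apply] at e00 e01 e10 e11
    norm_num at e00 e01 e10 e11
    replace e00 := congrArg (starRingEnd ℂ) e00
    replace e01 := congrArg (starRingEnd ℂ) e01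
    replace e10 := congrArg (starRingEnd ℂ) e10
    replace e11 := congrArg (starRingEnd ℂ) e11
    simp only [map_add, map_mul, apply_ite (starRingEnd ℂ), Complex.conj_conj,
      Complex.conj_ofReal, map_one, map_zero] at e00 e01 e10 e11
    have v00 : k (a, b) (0, 0) = if b = 1 ∧ a = 1 then (w 1 : ℂ)⁻¹ else 0 := by
      have : k (a, b) (0, 0) = (if b = 1 ∧ a = 1 then 1 else 0) * (w 1 : ℂ)⁻¹ := by
        field_simp
        exact e11
      rw [this]; split_ifs <;> simp
    have v01 : k (a, b) (0, 1) = if b = 0 ∧ a = 1 then (w 1 : ℂ)⁻¹ else 0 := by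
      have : k (a, b) (0, 1) = (if b = 0 ∧ a = 1 then 1 else 0) * (w 1 : ℂ)⁻¹ := by
        field_simp
        exact e01
      rw [this]; split_ifs <;> simp
    have v10 : k (a, b) (1, 0) = if b = 1 ∧ a = 0 then (w 1 : ℂ)⁻¹ else 0 := by
      have : k (a, b) (1, 0) = (if b = 1 ∧ a = 0 then 1 else 0) * (w 1 : ℂ)⁻¹ := by
        field_simp
        exact e10
      rw [this]; split_ifs <;> simp
    have v11 : k (a, b) (1, 1) = if b = 0 ∧ a = 0 then (w 1 : ℂ)⁻¹
        else if b = 1 ∧ a = 1 then -(w 0 : ℂ) / (w 1 : ℂ) ^ 2 else 0 := by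
      rw [v00] at e00
      split_ifs at e00 ⊢ <;>
        first
          | (exfalso; simp only [Fin.ext_iff, Fin.val_zero, Fin.val_one] at *; omega)
          | (field_simp at e00 ⊢; linear_combination e00)
          | (rw [zero_mul, zero_add] at e00;
             exact (mul_eq_zero.mp e00).resolve_right (Complex.ofReal_ne_zero.mpr hw1.ne'))
    clear h e00 e01 e10 e11
    obtain ⟨c, d⟩ := r
    fin_cases a <;> fin_cases b <;> fin_cases c <;> fin_cases d <;>
      simp_all [kSpec, Prod.ext_iff, Fin.mk_zero, Fin.mk_one, Prod.mk_zero_zero, Prod.mk_one_one]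
  · rintro rfl a b i j
    fin_cases a <;> fin_cases b <;> fin_cases i <;> fin_cases j <;>
      simp [kSpec, gram, Fintype.sum_prod_type, Fin.sum_univ_two, Prod.ext_iff] <;>
      field_simp <;> ring


end Para
end

section
/- For every integer l ≥ 2 and all real weights w_0, …, w_{l−1} > 0, the l² × l² Gram matrix G with entries G_{(c,d),(i,j)} = w_{c+j} if c+j = d+i and c+j ≤ l−1 and G_{(c,d),(i,j)} = 0 otherwise satisfies det G = (w_{l−1})^{l²} or det G = −(w_{l−1})^{l²}; in particular det G ≠ 0, so G is invertible. -/
open scoped BigOperators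

namespace Para

def sigma0 (l : ℕ) : Equiv.Perm (Fin l × Fin l) where
  toFun p := (p.2.rev, p.1.rev)
  invFun p := (p.2.rev, p.1.rev)
  left_inv p := by simp
  right_inv p := by simp

lemma sum_fst (l : ℕ) : ∑ p : Fin l × Fin l, (p.1 : ℕ) = l * ∑ i ∈ Finset.range l, i := by
  rw [Fintype.sum_prod_type, Fin.sum_univ_eq_sum_range (fun i => ∑ _j : Fin l, i)]
  simp [Finset.mul_sum, mul_comm]

lemma sum_snd (l : ℕ) : ∑ p : Fin l × Fin l, (p.2 : ℕ) = l * ∑ i ∈ Finset.range l, i := by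
  rw [Fintype.sum_prod_type_right, Fin.sum_univ_eq_sum_range (fun i => ∑ _j : Fin l, i)]
  simp [Finset.mul_sum, mul_comm]

lemma each_eq_max (l : ℕ) (f : Fin l × Fin l → ℕ) (hle : ∀ p, f p ≤ l - 1)
    (hsum : ∑ p : Fin l × Fin l, f p = l * l * (l - 1)) : ∀ p, f p = l - 1 := by
  by_contra h
  push_neg at h
  obtain ⟨p0, hp0⟩ := h
  have hlt : ∑ p : Fin l × Fin l, f p < ∑ _p : Fin l × Fin l, (l - 1) := by
    apply Finset.sum_lt_sum (fun i _ => hle i)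
    exact ⟨p0, Finset.mem_univ _, lt_of_le_of_ne (hle p0) hp0⟩
  rw [hsum, Finset.sum_const, Finset.card_univ] at hlt
  simp only [Fintype.card_prod, Fintype.card_fin, smul_eq_mul] at hlt
  exact absurd hlt (lt_irrefl _)

/-- For every `l ≥ 2` and all weights `w_0, …, w_{l−1} > 0`, the `l² × l²`
Gram matrix satisfies `det G = ±(w_{l−1})^{l²}`; in particular `det G ≠ 0`,
so `G` is invertible. -/
theorem gram_det_general (l : ℕ) (hl : 2 ≤ l) (w : ℕ → ℝ) (hw : ∀ n < l, 0 < w n) :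
    ((gram l w).det = (w (l - 1)) ^ (l ^ 2) ∨ (gram l w).det = -(w (l - 1)) ^ (l ^ 2)) ∧
    (gram l w).det ≠ 0 := by
  have hwl : 0 < w (l - 1) := hw (l - 1) (by omega)
  -- the product along σ₀ is w(l-1)^(l²)
  have hprod0 : ∏ p : Fin l × Fin l, gram l w ((sigma0 l) p) p = (w (l - 1)) ^ (l ^ 2) := by
    have : ∀ p : Fin l × Fin l, gram l w ((sigma0 l) p) p = w (l - 1) := by
      intro p
      have h1 : ((p.2.rev : ℕ) + (p.2 : ℕ)) = l - 1 := by
        have := p.2.isLt; rw [Fin.val_rev]; omega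
      have h2 : ((p.1.rev : ℕ) + (p.1 : ℕ)) = l - 1 := by
        have := p.1.isLt; rw [Fin.val_rev]; omega
      simp only [gram, sigma0, Matrix.of_apply, Equiv.coe_fn_mk]
      rw [if_pos ⟨by omega, by omega⟩, h1]
    rw [Finset.prod_congr rfl (fun p _ => this p), Finset.prod_const, Finset.card_univ]
    simp [Fintype.card_prod, sq]
  -- any other permutation contributes zero
  have hzero : ∀ σ : Equiv.Perm (Fin l × Fin l), σ ≠ sigma0 l →
      ∏ p : Fin l × Fin l, gram l w (σ p) p = 0 := by
    intro σ hσ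
    by_contra hne
    have hfac : ∀ p : Fin l × Fin l,
        ((σ p).1 : ℕ) + (p.2 : ℕ) = ((σ p).2 : ℕ) + (p.1 : ℕ) ∧
        ((σ p).1 : ℕ) + (p.2 : ℕ) ≤ l - 1 := by
      intro p
      have := Finset.prod_ne_zero_iff.mp hne p (Finset.mem_univ p)
      simp only [gram, Matrix.of_apply] at this
      by_contra hc
      rw [if_neg hc] at this
      exact this rfl
    -- sum argument
    have hsum : ∑ p : Fin l × Fin l, (((σ p).1 : ℕ) + (p.2 : ℕ)) = l * l * (l - 1) := by
      rw [Finset.sum_add_distrib]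
      have h1 : ∑ p : Fin l × Fin l, ((σ p).1 : ℕ) = ∑ p : Fin l × Fin l, (p.1 : ℕ) :=
        Equiv.sum_comp σ (fun p => (p.1 : ℕ))
      rw [h1, sum_fst, sum_snd]
      have hg := Finset.sum_range_id_mul_two l
      have key : l * ∑ i ∈ Finset.range l, i + l * ∑ i ∈ Finset.range l, i
          = l * ((∑ i ∈ Finset.range l, i) * 2) := by ring
      rw [key, hg]; ring
    have heach := each_eq_max l (fun p => ((σ p).1 : ℕ) + (p.2 : ℕ))
      (fun p => (hfac p).2) hsum
    apply hσ
    ext p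
    · have h1 := heach p
      have h2 := (hfac p).1
      have := p.2.isLt
      simp only [sigma0, Equiv.coe_fn_mk]
      have : ((σ p).1 : ℕ) = (p.2.rev : ℕ) := by rw [Fin.val_rev]; omega
      exact this
    · have h1 := heach p
      have h2 := (hfac p).1
      have := p.1.isLt
      simp only [sigma0, Equiv.coe_fn_mk]
      have : ((σ p).2 : ℕ) = (p.1.rev : ℕ) := by rw [Fin.val_rev]; omega
      exact this
  have hdet : (gram l w).det = (Equiv.Perm.sign (sigma0 l) : ℤ) • (w (l - 1)) ^ (l ^ 2) := by
    rw [Matrix.det_apply]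
    rw [Finset.sum_eq_single_of_mem (sigma0 l) (Finset.mem_univ _)
      (fun σ _ hσ => by rw [hzero σ hσ, smul_zero])]
    rw [hprod0]
    simp [Units.smul_def, zsmul_eq_mul]
  rcases Int.units_eq_one_or (Equiv.Perm.sign (sigma0 l)) with hs | hs
  · rw [hs] at hdet
    simp only [Units.val_one, one_smul] at hdet
    refine ⟨Or.inl hdet, ?_⟩
    rw [hdet]
    positivity
  · rw [hs] at hdet
    simp only [Units.val_neg, Units.val_one, neg_smul, one_smul] at hdet
    refine ⟨Or.inr hdet, ?_⟩
    rw [hdet]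
    simp only [ne_eq, neg_eq_zero]
    positivity

end Para
end

section
/- For every integer l ≥ 2 and all real weights w_0, …, w_{l−1} > 0, the paragrassmann space PG_{l,q} has a unique reproducing kernel with respect to ⟨·,·⟩_w: there exists exactly one function k : ({0,…,l−1}²) × ({0,…,l−1}²) → ℂ such that Σ_{(c,d)} conj(k_{(a,b),(c,d)}) G_{(c,d),(i,j)} = δ_{b,i} δ_{a,j} for all a, b, i, j ∈ {0,…,l−1}; this is the coordinate form of the statement that there is a unique K_PG = Σ k_{(a,b),(c,d)} θ^a θ̄^b ⊗ η^c η̄^d satisfying the reproducing formula f(θ,θ̄) = ⟨K_PG, f(η,η̄)⟩_w for all f ∈ PG_{l,q}. -/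
open scoped BigOperators

namespace Para

/-- For every `l ≥ 2` and all weights `w_0, …, w_{l−1} > 0`, the
paragrassmann space `PG_{l,q}` has a unique reproducing kernel w.r.t. `⟨·,·⟩_w`: there
exists exactly one `k : ({0,…,l−1}²) × ({0,…,l−1}²) → ℂ` such that
`Σ_{(c,d)} conj(k_{(a,b),(c,d)}) G_{(c,d),(i,j)} = δ_{b,i} δ_{a,j}` for all `a, b, i, j`
(the coordinate form of the reproducing formula `f(θ,θ̄) = ⟨K_PG, f(η,η̄)⟩_w`
for all `f ∈ PG_{l,q}`). -/
theorem reproducing_kernel_PG_unique (l : ℕ) (hl : 2 ≤ l)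
    (w : ℕ → ℝ) (hw : ∀ n < l, 0 < w n) :
    ∃! k : (Fin l × Fin l) → (Fin l × Fin l) → ℂ,
      ∀ a b i j : Fin l,
        ∑ p : Fin l × Fin l,
          (starRingEnd ℂ) (k (a, b) p) * ((gram l w p (i, j) : ℝ) : ℂ) =
            if b = i ∧ a = j then 1 else 0 := by
  classical
  set Gc : Matrix (Fin l × Fin l) (Fin l × Fin l) ℂ :=
    Matrix.of (fun p r => ((gram l w p r : ℝ) : ℂ)) with hGc
  have hl1 : l - 1 < l := by omega
  have hwl : ((w (l - 1) : ℝ) : ℂ) ≠ 0 := by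
    exact_mod_cast (hw (l - 1) hl1).ne'
  have hker : ∀ x : (Fin l × Fin l) → ℂ, Gc.mulVec x = 0 → x = 0 := by
    intro x hx
    have key : ∀ n : ℕ, ∀ i j : Fin l, (i : ℕ) + (j : ℕ) = n → x (i, j) = 0 := by
      intro n
      induction n using Nat.strong_induction_on with
      | _ n ih =>
        intro i j hij
        have hi : (i : ℕ) < l := i.isLt
        have hj : (j : ℕ) < l := j.isLt
        set c : Fin l := ⟨l - 1 - (j : ℕ), by omega⟩ with hcdef
        set d : Fin l := ⟨l - 1 - (i : ℕ), by omega⟩ with hddef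
        have hc' : (c : ℕ) = l - 1 - (j : ℕ) := rfl
        have hd' : (d : ℕ) = l - 1 - (i : ℕ) := rfl
        have h0 := congrFun hx (c, d)
        have hsum : ∑ r : Fin l × Fin l, Gc (c, d) r * x r = Gc (c, d) (i, j) * x (i, j) := by
          apply Finset.sum_eq_single_of_mem _ (Finset.mem_univ _)
          rintro ⟨i', j'⟩ _ hne
          by_cases hcond : ((c : ℕ) + (j' : ℕ) = (d : ℕ) + (i' : ℕ) ∧ (c : ℕ) + (j' : ℕ) ≤ l - 1)
          · have hne' : ¬((i' : ℕ) = (i : ℕ) ∧ (j' : ℕ) = (j : ℕ)) := by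
              rintro ⟨h1, h2⟩
              exact hne (Prod.ext (Fin.ext h1) (Fin.ext h2))
            have hi' : (i' : ℕ) < l := i'.isLt
            have hj' : (j' : ℕ) < l := j'.isLt
            have hlt : (i' : ℕ) + (j' : ℕ) < n := by omega
            have hx0 : x (i', j') = 0 := ih _ hlt i' j' rfl
            rw [hx0, mul_zero]
          · have hz : Gc (c, d) (i', j') = 0 := by
              show ((gram l w (c, d) (i', j') : ℝ) : ℂ) = 0
              unfold gram
              rw [Matrix.of_apply, if_neg hcond, Complex.ofReal_zero]
            rw [hz, zero_mul]
        have hcj : (c : ℕ) + (j : ℕ) = l - 1 := by omega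
        have hcond : (c : ℕ) + (j : ℕ) = (d : ℕ) + (i : ℕ) ∧ (c : ℕ) + (j : ℕ) ≤ l - 1 := by
          constructor <;> omega
        have hdiag : Gc (c, d) (i, j) = ((w (l - 1) : ℝ) : ℂ) := by
          show (((if (c : ℕ) + (j : ℕ) = (d : ℕ) + (i : ℕ) ∧ (c : ℕ) + (j : ℕ) ≤ l - 1
              then w ((c : ℕ) + (j : ℕ)) else 0) : ℝ) : ℂ) = _
          rw [if_pos hcond, hcj]
        have h0' : ((w (l - 1) : ℝ) : ℂ) * x (i, j) = 0 := by
          rw [← hdiag, ← hsum]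
          simpa [Matrix.mulVec, dotProduct] using h0
        rcases mul_eq_zero.mp h0' with h | h
        · exact absurd h hwl
        · exact h
    funext r
    obtain ⟨i, j⟩ := r
    exact key _ i j rfl
  have hinj : Function.Injective Gc.mulVec := by
    have h : Function.Injective Gc.mulVecLin := by
      rw [← LinearMap.ker_eq_bot, LinearMap.ker_eq_bot']
      intro x hx
      exact hker x hx
    rwa [Matrix.coe_mulVecLin] at h
  have hU : IsUnit Gc := Matrix.mulVec_injective_iff_isUnit.mp hinj
  haveI : Invertible Gc := hU.invertible
  have hinvmul : Gc⁻¹ * Gc = 1 := Matrix.nonsing_inv_mul Gc ((Matrix.isUnit_iff_isUnit_det Gc).mp hU)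
  refine ⟨fun q p => (starRingEnd ℂ) (Gc⁻¹ (q.2, q.1) p), ?_, ?_⟩
  · intro a b i j
    have hmm : (∑ p : Fin l × Fin l,
        (starRingEnd ℂ) ((starRingEnd ℂ) (Gc⁻¹ (b, a) p)) * ((gram l w p (i, j) : ℝ) : ℂ))
        = (Gc⁻¹ * Gc) (b, a) (i, j) := by
      rw [Matrix.mul_apply]
      refine Finset.sum_congr rfl fun p _ => ?_
      rw [Complex.conj_conj]
      rfl
    show (∑ p : Fin l × Fin l,
        (starRingEnd ℂ) ((starRingEnd ℂ) (Gc⁻¹ (b, a) p)) * ((gram l w p (i, j) : ℝ) : ℂ))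
        = if b = i ∧ a = j then 1 else 0
    rw [hmm, hinvmul, Matrix.one_apply]
    by_cases h : b = i ∧ a = j
    · rw [if_pos (by rw [h.1, h.2] : ((b, a) : Fin l × Fin l) = (i, j)), if_pos h]
    · rw [if_neg h, if_neg (by simp [Prod.ext_iff]; tauto)]
  · intro k' hk'
    funext q
    obtain ⟨a, b⟩ := q
    have hvec : Gc.vecMul (fun p => (starRingEnd ℂ) (k' (a, b) p))
        = Gc.vecMul (fun p => Gc⁻¹ (b, a) p) := by
      funext r
      obtain ⟨i, j⟩ := r
      have h1 := hk' a b i j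
      have h2 : Gc.vecMul (fun p => Gc⁻¹ (b, a) p) (i, j) = (Gc⁻¹ * Gc) (b, a) (i, j) := by
        rw [Matrix.mul_apply]
        rfl
      have e1 : Gc.vecMul (fun p => (starRingEnd ℂ) (k' (a, b) p)) (i, j)
          = ∑ p : Fin l × Fin l, (starRingEnd ℂ) (k' (a, b) p) * ((gram l w p (i, j) : ℝ) : ℂ) :=
        rfl
      rw [e1, h1, h2, hinvmul, Matrix.one_apply]
      by_cases h : b = i ∧ a = j
      · rw [if_pos h, if_pos (by rw [h.1, h.2] : ((b, a) : Fin l × Fin l) = (i, j))]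
      · rw [if_neg h, if_neg (by simp [Prod.ext_iff]; tauto)]
    have := Matrix.vecMul_injective_of_invertible Gc hvec
    funext p
    have hp := congrFun this p
    have := congrArg (starRingEnd ℂ) hp
    simpa [Complex.conj_conj] using this

end Para
end
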